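/- Let $A_\lambda = \{u \in L_\varphi(\mu) : I_\varphi(\lambda u) < \infty\}$. Then $\bigcap_{\lambda > 0} A_\lambda = \bigcap_{n \in \mathbb{N}} A_n$, and every $u$ in this intersection has absolutely continuous norm and is $\sigma$-finitely concentrated, i.e. $\bigcap_{\lambda > 0} A_\lambda \subset C_\varphi^\sigma(\mu)$. -/

import Mathlib

open MeasureTheory Filter Topology ENNReal

/-- An Orlicz integrand `φ : Ω × X → [0,∞]`: for a.e. `ω` the partial map `φ ω` is an
Orlicz function (even, convex, lsc, proper, vanishing continuously at the origin and
tending to `∞` at infinity), and `φ` is measurable in the sense that its composition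
with any strongly measurable function is measurable. -/
structure IsOrliczIntegrand {Ω X : Type*} [MeasurableSpace Ω]
    [NormedAddCommGroup X] [NormedSpace ℝ X]
    (μ : Measure Ω) (φ : Ω → X → ℝ≥0∞) : Prop where
  ae_even : ∀ᵐ ω ∂μ, ∀ x : X, φ ω (-x) = φ ω x
  ae_convex : ∀ᵐ ω ∂μ, ∀ x y : X, ∀ a b : ℝ, 0 ≤ a → 0 ≤ b → a + b = 1 →
    φ ω (a • x + b • y) ≤ ENNReal.ofReal a * φ ω x + ENNReal.ofReal b * φ ω y
  ae_lsc : ∀ᵐ ω ∂μ, LowerSemicontinuous (φ ω)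
  ae_proper : ∀ᵐ ω ∂μ, ∃ x, φ ω x ≠ ⊤
  ae_zero : ∀ᵐ ω ∂μ, Tendsto (φ ω) (nhds 0) (nhds 0)
  ae_coercive : ∀ᵐ ω ∂μ, Tendsto (φ ω) (Filter.comap norm Filter.atTop) (nhds ⊤)
  meas_comp : ∀ u : Ω → X, StronglyMeasurable u → Measurable fun ω => φ ω (u ω)

/-- The Orlicz modular `I_φ(u) = ∫ φ(ω, u(ω)) dμ(ω)`. -/
noncomputable def orliczModular {Ω X : Type*} [MeasurableSpace Ω]
    (μ : Measure Ω) (φ : Ω → X → ℝ≥0∞) (u : Ω → X) : ℝ≥0∞ :=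
  ∫⁻ ω, φ ω (u ω) ∂μ

/-- The Luxemburg norm `‖u‖_φ = inf {α > 0 : I_φ(u/α) ≤ 1}`. -/
noncomputable def luxNorm {Ω X : Type*} [MeasurableSpace Ω]
    [NormedAddCommGroup X] [NormedSpace ℝ X]
    (μ : Measure Ω) (φ : Ω → X → ℝ≥0∞) (u : Ω → X) : ℝ≥0∞ :=
  ⨅ a : {a : ℝ // 0 < a ∧ orliczModular μ φ (fun ω => a⁻¹ • u ω) ≤ 1},
    ENNReal.ofReal a

/-- Membership in the Orlicz space `L_φ(μ)`: strongly measurable with finite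
Luxemburg norm. -/
def MemOrlicz {Ω X : Type*} [MeasurableSpace Ω]
    [NormedAddCommGroup X] [NormedSpace ℝ X]
    (μ : Measure Ω) (φ : Ω → X → ℝ≥0∞) (u : Ω → X) : Prop :=
  StronglyMeasurable u ∧ luxNorm μ φ u < ⊤

/-- The Amemiya norm `⦀u⦀_φ = inf_{α>0} α⁻¹ (1 + I_φ(α u))`. -/
noncomputable def amemiyaNorm {Ω X : Type*} [MeasurableSpace Ω]
    [NormedAddCommGroup X] [NormedSpace ℝ X]
    (μ : Measure Ω) (φ : Ω → X → ℝ≥0∞) (u : Ω → X) : ℝ≥0∞ :=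
  ⨅ a : {a : ℝ // 0 < a},
    ENNReal.ofReal (a : ℝ)⁻¹ * (1 + orliczModular μ φ (fun ω => (a : ℝ) • u ω))

/-- A function is σ-finitely concentrated if it vanishes (a.e.) outside a σ-finite
measurable set. -/
def SigmaFiniteConc {Ω X : Type*} [MeasurableSpace Ω] [Zero X]
    (μ : MeasureTheory.Measure Ω) (u : Ω → X) : Prop :=
  ∃ S : Set Ω, MeasurableSet S ∧
    (∃ g : ℕ → Set Ω, S = ⋃ n, g n ∧ ∀ n, MeasurableSet (g n) ∧ μ (g n) < ⊤) ∧
    ∀ᵐ ω ∂μ, ω ∉ S → u ω = 0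

/-- `u` has absolutely continuous norm: `‖u χ_{E_n}‖_φ → 0` for every sequence of
measurable sets with `χ_{E_n} → 0` a.e. -/
def AbsContNorm {Ω X : Type*} [MeasurableSpace Ω]
    [NormedAddCommGroup X] [NormedSpace ℝ X]
    (μ : MeasureTheory.Measure Ω) (φ : Ω → X → ℝ≥0∞) (u : Ω → X) : Prop :=
  ∀ E : ℕ → Set Ω, (∀ n, MeasurableSet (E n)) →
    (∀ᵐ ω ∂μ, ∀ᶠ n in Filter.atTop, ω ∉ E n) →
    Filter.Tendsto (fun n => luxNorm μ φ ((E n).indicator u)) Filter.atTop (nhds 0)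


private theorem phiZeroAux {X : Type*} [NormedAddCommGroup X] [NormedSpace ℝ X]
    (f : X → ℝ≥0∞) (hz : Tendsto f (nhds 0) (nhds 0)) (hl : LowerSemicontinuous f) :
    f 0 = 0 := by
  by_contra h
  have hpos : 0 < f 0 := pos_iff_ne_zero.mpr h
  obtain ⟨y, hy0, hyf⟩ := exists_between hpos
  have h1 : ∀ᶠ x in 𝓝 (0:X), y < f x := hl 0 y hyf
  have h2 : ∀ᶠ x in 𝓝 (0:X), f x < y := hz.eventually_lt_const hy0
  obtain ⟨x, hx1, hx2⟩ := (h1.and h2).exists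
  exact absurd (hx1.trans hx2) (lt_irrefl y)

/-- For `A_λ = {u ∈ L_φ : I_φ(λ u) < ∞}`, the intersection over all
`λ > 0` equals the intersection over positive naturals, and it is contained in
`C_φ^σ(μ)` (elements with absolutely continuous norm vanishing off a σ-finite set). -/
theorem inter_Alambda_subset_Csigma {Ω X : Type*} [MeasurableSpace Ω]
    [NormedAddCommGroup X] [NormedSpace ℝ X]
    (μ : Measure Ω) (φ : Ω → X → ℝ≥0∞) (hφ : IsOrliczIntegrand μ φ) :
    (⋂ (l : ℝ) (_ : 0 < l),
        {u : Ω → X | MemOrlicz μ φ u ∧ orliczModular μ φ (l • u) < ⊤}) =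
      (⋂ (n : ℕ) (_ : 0 < n),
        {u : Ω → X | MemOrlicz μ φ u ∧ orliczModular μ φ ((n : ℝ) • u) < ⊤}) ∧
    (⋂ (l : ℝ) (_ : 0 < l),
        {u : Ω → X | MemOrlicz μ φ u ∧ orliczModular μ φ (l • u) < ⊤}) ⊆
      {u : Ω → X | MemOrlicz μ φ u ∧ AbsContNorm μ φ u ∧ SigmaFiniteConc μ u} := by
  classical
  have h0 : ∀ᵐ ω ∂μ, φ ω 0 = 0 := by
    filter_upwards [hφ.ae_zero, hφ.ae_lsc] with ω hz hl
    exact phiZeroAux _ hz hl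
  have hscale : ∀ᵐ ω ∂μ, ∀ x : X, ∀ t : ℝ, 0 ≤ t → t ≤ 1 →
      φ ω (t • x) ≤ φ ω x := by
    filter_upwards [hφ.ae_convex, h0] with ω hc h0ω
    intro x t ht0 ht1
    have := hc x 0 t (1 - t) ht0 (by linarith) (by ring)
    simp only [smul_zero, add_zero, h0ω, mul_zero] at this
    calc φ ω (t • x) ≤ ENNReal.ofReal t * φ ω x := this
      _ ≤ 1 * φ ω x := by
          gcongr
          exact ENNReal.ofReal_le_one.mpr ht1
      _ = φ ω x := one_mul _
  constructor
  · apply Set.Subset.antisymm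
    · intro u hu
      simp only [Set.mem_iInter, Set.mem_setOf_eq] at *
      intro n hn
      exact hu (n : ℝ) (by exact_mod_cast hn)
    · intro u hu
      simp only [Set.mem_iInter, Set.mem_setOf_eq] at *
      intro l hl
      set n : ℕ := ⌈l⌉₊ with hn_def
      have hn : 0 < n := Nat.ceil_pos.mpr hl
      obtain ⟨hmem, hfin⟩ := hu n hn
      refine ⟨hmem, ?_⟩
      have hln : l ≤ (n : ℝ) := Nat.le_ceil l
      have hnpos : (0:ℝ) < n := lt_of_lt_of_le hl hln
      calc orliczModular μ φ (l • u)
          ≤ orliczModular μ φ ((n : ℝ) • u) := by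
            apply lintegral_mono_ae
            filter_upwards [hscale] with ω hsc
            have hx : (l • u) ω = (l / n) • (((n : ℝ) • u) ω) := by
              simp only [Pi.smul_apply, smul_smul]
              rw [div_mul_cancel₀ _ hnpos.ne']
            rw [hx]
            exact hsc _ _ (div_nonneg hl.le hnpos.le)
              ((div_le_one hnpos).mpr hln)
        _ < ⊤ := hfin
  · intro u hu
    simp only [Set.mem_iInter, Set.mem_setOf_eq] at hu
    have humem : MemOrlicz μ φ u := (hu 1 one_pos).1
    have husm := humem.1
    have hfin : ∀ c : ℝ, 0 < c → orliczModular μ φ (c • u) < ⊤ :=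
      fun c hc => (hu c hc).2
    refine ⟨humem, ?_, ?_⟩
    · -- absolutely continuous norm
      intro E hE hEae
      rw [ENNReal.tendsto_nhds_zero]
      intro ε hε
      obtain ⟨c, hc, hcε⟩ : ∃ c : ℝ, 0 < c ∧ ENNReal.ofReal c ≤ ε := by
        rcases eq_or_ne ε ⊤ with rfl | hne
        · exact ⟨1, one_pos, le_top⟩
        · exact ⟨ε.toReal, ENNReal.toReal_pos hε.ne' hne,
            (ENNReal.ofReal_toReal hne).le⟩
      have hb : orliczModular μ φ (c⁻¹ • u) < ⊤ := hfin _ (inv_pos.mpr hc)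
      have hmod : Tendsto
          (fun n => orliczModular μ φ (fun ω => c⁻¹ • (E n).indicator u ω))
          atTop (𝓝 0) := by
        have hDC := tendsto_lintegral_of_dominated_convergence (μ := μ)
          (F := fun n ω => φ ω (c⁻¹ • (E n).indicator u ω))
          (f := fun _ => 0) (bound := fun ω => φ ω (c⁻¹ • u ω))
          (fun n => hφ.meas_comp _ ((husm.indicator (hE n)).const_smul c⁻¹))
          (by
            intro n
            filter_upwards [h0] with ω h0ω
            by_cases hωE : ω ∈ E n
            · simp [Set.indicator_of_mem hωE]
            · simp [Set.indicator_of_notMem hωE, h0ω])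
          (by
            have : (∫⁻ ω, φ ω (c⁻¹ • u ω) ∂μ) = orliczModular μ φ (c⁻¹ • u) := rfl
            rw [this]; exact hb.ne)
          (by
            filter_upwards [hEae, h0] with ω hev h0ω
            apply tendsto_const_nhds.congr'
            filter_upwards [hev] with n hn
            simp [Set.indicator_of_notMem hn, h0ω])
        simpa [orliczModular, lintegral_zero] using hDC
      have hev : ∀ᶠ n in atTop,
          orliczModular μ φ (fun ω => c⁻¹ • (E n).indicator u ω) ≤ 1 :=
        (hmod.eventually_lt_const one_pos).mono fun n hn => hn.le
      filter_upwards [hev] with n hn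
      calc luxNorm μ φ ((E n).indicator u)
          ≤ ENNReal.ofReal c := iInf_le (fun a : {a : ℝ // 0 < a ∧ orliczModular μ φ (fun ω => a⁻¹ • (E n).indicator u ω) ≤ 1} => ENNReal.ofReal (a : ℝ)) ⟨c, hc, hn⟩
        _ ≤ ε := hcε
    · -- σ-finite concentration
      have hmeas : ∀ n : ℕ, Measurable (fun ω => φ ω ((n : ℝ) • u ω)) :=
        fun n => hφ.meas_comp _ (husm.const_smul _)
      set g : ℕ → Set Ω := fun n => {ω | 1 ≤ φ ω ((n : ℝ) • u ω)} with hg_def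
      have hgmeas : ∀ n, MeasurableSet (g n) :=
        fun n => measurableSet_le measurable_const (hmeas n)
      have hgfin : ∀ n, μ (g n) < ⊤ := by
        intro n
        have hmark : 1 * μ (g n) ≤ ∫⁻ ω, φ ω ((n : ℝ) • u ω) ∂μ :=
          mul_meas_ge_le_lintegral₀ (hmeas n).aemeasurable 1
        rw [one_mul] at hmark
        rcases Nat.eq_zero_or_pos n with rfl | hn
        · simp only [Nat.cast_zero] at hmark
          refine lt_of_le_of_lt hmark ?_
          have : (∫⁻ ω, φ ω ((0 : ℝ) • u ω) ∂μ) = 0 := by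
            rw [← lintegral_zero (μ := μ)]
            apply lintegral_congr_ae
            filter_upwards [h0] with ω h0ω
            simp [h0ω]
          rw [this]; exact ENNReal.zero_lt_top
        · exact lt_of_le_of_lt hmark (hfin (n : ℝ) (by exact_mod_cast hn))
      refine ⟨⋃ n, g n, MeasurableSet.iUnion hgmeas,
        ⟨g, rfl, fun n => ⟨hgmeas n, hgfin n⟩⟩, ?_⟩
      filter_upwards [hφ.ae_coercive] with ω hco hnot
      by_contra hu0
      have hnorm : Tendsto (fun n : ℕ => ‖(n : ℝ) • u ω‖) atTop atTop := by
        have heq : ∀ n : ℕ, ‖(n : ℝ) • u ω‖ = (n : ℝ) * ‖u ω‖ := by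
          intro n
          rw [norm_smul, Real.norm_natCast]
        simp only [heq]
        exact (tendsto_natCast_atTop_atTop).atTop_mul_const
          (norm_pos_iff.mpr hu0)
      have htend : Tendsto (fun n : ℕ => (n : ℝ) • u ω) atTop
          (Filter.comap norm Filter.atTop) := tendsto_comap_iff.mpr hnorm
      have hcomp : Tendsto (fun n : ℕ => φ ω ((n : ℝ) • u ω)) atTop (𝓝 ⊤) :=
        hco.comp htend
      have : ∀ᶠ n : ℕ in atTop, 1 < φ ω ((n : ℝ) • u ω) :=
        hcomp.eventually_const_lt one_lt_top
      obtain ⟨n, hn⟩ := this.exists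
      exact hnot (Set.mem_iUnion.mpr ⟨n, hn.le⟩)
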